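/- Fix α ∈ (0,1) and μ > 0, and let q = Φ⁻¹(1 − α/2). Define f(c) = Φ((−q − μ√c)/√(2c)) + 1 − Φ((q − μ√c)/√(2c)) for real c > 0. Then f is monotonically increasing in c. -/
import Mathlib


open MeasureTheory ProbabilityTheory

/-- Standard normal cumulative distribution function. -/
noncomputable def stdNormalCDF (t : ℝ) : ℝ := ((gaussianReal 0 1) (Set.Iic t)).toReal

lemma stdNormalCDF_mono : Monotone stdNormalCDF := by
  intro a b hab
  exact ENNReal.toReal_mono (measure_ne_top _ _)
    (measure_mono (Set.Iic_subset_Iic.2 hab))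

lemma stdNormalCDF_zero : stdNormalCDF 0 = 1 / 2 := by
  have hmap : (gaussianReal 0 1).map (· * (-1 : ℝ)) = gaussianReal 0 1 := by
    rw [gaussianReal_map_mul_const]
    norm_num
  have h1 : (gaussianReal 0 1) (Set.Iic (0:ℝ)) = (gaussianReal 0 1) (Set.Ici (0:ℝ)) := by
    conv_lhs => rw [← hmap]
    rw [Measure.map_apply (measurable_mul_const _) measurableSet_Iic]
    congr 1
    ext x
    simp [neg_nonneg]
  have hz : (gaussianReal 0 1) ({0} : Set ℝ) = 0 := by
    refine gaussianReal_absolutelyContinuous 0 one_ne_zero ?_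
    simp
  have h2 := measure_union_add_inter (μ := gaussianReal 0 1) (t := Set.Ici (0:ℝ))
    (Set.Iic (0:ℝ)) measurableSet_Ici
  rw [Set.Iic_union_Ici, Set.Iic_inter_Ici, Set.Icc_self, hz, add_zero, measure_univ, ← h1] at h2
  have : (gaussianReal 0 1) (Set.Iic (0:ℝ)) = 1/2 := by
    rw [← two_mul] at h2
    rw [ENNReal.eq_div_iff (by norm_num) (by norm_num), mul_comm]
    rw [mul_comm] at h2; exact h2.symm
  rw [stdNormalCDF, this]
  simp [ENNReal.toReal_div]

/-- With q = Φ⁻¹(1 − α/2) and μ > 0, the function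
f(c) = Φ((−q − μ√c)/√(2c)) + 1 − Φ((q − μ√c)/√(2c)) is monotonically increasing in c > 0. -/
theorem exclusion_prob_monotone
    (α : ℝ) (hα : α ∈ Set.Ioo (0 : ℝ) 1) (μ : ℝ) (hμ : 0 < μ)
    (q : ℝ) (hq : stdNormalCDF q = 1 - α / 2) :
    MonotoneOn
      (fun c : ℝ =>
        stdNormalCDF ((-q - μ * Real.sqrt c) / Real.sqrt (2 * c))
          + 1 - stdNormalCDF ((q - μ * Real.sqrt c) / Real.sqrt (2 * c)))
      (Set.Ioi (0 : ℝ)) := by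
  obtain ⟨hα0, hα1⟩ := hα
  have hqpos : 0 < q := by
    by_contra h
    push_neg at h
    have := stdNormalCDF_mono h
    rw [stdNormalCDF_zero, hq] at this
    linarith
  intro c₁ hc₁ c₂ hc₂ hle
  simp only [Set.mem_Ioi] at hc₁ hc₂
  have hs₁ : 0 < Real.sqrt c₁ := Real.sqrt_pos.2 hc₁
  have hs₂ : 0 < Real.sqrt c₂ := Real.sqrt_pos.2 hc₂
  have hss : Real.sqrt c₁ ≤ Real.sqrt c₂ := Real.sqrt_le_sqrt hle
  have h2 : (0:ℝ) < Real.sqrt 2 := by positivity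
  have hrw₁ : Real.sqrt (2 * c₁) = Real.sqrt 2 * Real.sqrt c₁ := Real.sqrt_mul (by norm_num) _
  have hrw₂ : Real.sqrt (2 * c₂) = Real.sqrt 2 * Real.sqrt c₂ := Real.sqrt_mul (by norm_num) _
  have ha : (-q - μ * Real.sqrt c₁) / Real.sqrt (2 * c₁)
      ≤ (-q - μ * Real.sqrt c₂) / Real.sqrt (2 * c₂) := by
    rw [hrw₁, hrw₂, div_le_div_iff₀ (by positivity) (by positivity)]
    nlinarith [mul_le_mul_of_nonneg_left hss hqpos.le]
  have hb : (q - μ * Real.sqrt c₂) / Real.sqrt (2 * c₂)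
      ≤ (q - μ * Real.sqrt c₁) / Real.sqrt (2 * c₁) := by
    rw [hrw₁, hrw₂, div_le_div_iff₀ (by positivity) (by positivity)]
    nlinarith [mul_le_mul_of_nonneg_left hss hqpos.le]
  have h1 := stdNormalCDF_mono ha
  have h2 := stdNormalCDF_mono hb
  simp only
  linarith
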